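/- Let L be a locally compact Hausdorff topological space and consider the real Banach space C₀(L). For every 0 < ε < 1/4, if f₀ ∈ S_{C₀(L)}, μ ∈ S_{C₀(L)*} and a bounded linear operator T : C₀(L) → C₀(L) with ‖T‖ = 1 satisfy μ(f₀) > 1 − ε²/50 and |μ(T f₀)| = 1, then there exist f₁ ∈ S_{C₀(L)} and ν ∈ S_{C₀(L)*} such that |ν(T f₁)| = ν(f₁) = 1, ‖f₁ − f₀‖ < ε and ‖ν − μ‖ < ε. In particular, every real space C₀(L) has property (nu). -/

import Mathlib

open scoped ZeroAtInfty

/-- Property (nu) for a normed space. -/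
def PropertyNu (𝕂 : Type*) [RCLike 𝕂] (X : Type*) [NormedAddCommGroup X]
    [NormedSpace 𝕂 X] : Prop :=
  ∀ ε : ℝ, 0 < ε → ∃ η : ℝ, 0 < η ∧
    ∀ (T : X →L[𝕂] X) (x₀ : X) (f₀ : X →L[𝕂] 𝕂),
      ‖T‖ = 1 → ‖x₀‖ = 1 → ‖f₀‖ = 1 → 1 - η < RCLike.re (f₀ x₀) → ‖f₀ (T x₀)‖ = 1 →
      ∃ (S : X →L[𝕂] X) (x₁ : X) (f₁ : X →L[𝕂] 𝕂),
        ‖S‖ = 1 ∧ ‖x₁‖ = 1 ∧ ‖f₁‖ = 1 ∧ ‖f₁ (S x₁)‖ = 1 ∧ f₁ x₁ = 1 ∧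
        ‖x₁ - x₀‖ < ε ∧ ‖f₁ - f₀‖ < ε ∧ ‖S - T‖ < ε

namespace NuAux

/-! Auxiliary real scalar functions: a clamp `cl` and a ramp `rh`. -/

noncomputable def cl (r t : ℝ) : ℝ := max (-1) (min 1 (t / (1 - r)))
noncomputable def rh (r t : ℝ) : ℝ := max 0 (min 1 ((t - (1 - r)) * (2 / r)))

lemma cl_continuous (r : ℝ) : Continuous (cl r) :=
  continuous_const.max (continuous_const.min (continuous_id.div_const _))

lemma rh_continuous (r : ℝ) : Continuous (rh r) :=
  continuous_const.max (continuous_const.min (by fun_prop))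

variable {r t : ℝ}

lemma cl_zero (hr1 : r < 1/2) : cl r 0 = 0 := by
  simp only [cl, zero_div]
  rw [min_eq_right (by norm_num), max_eq_right (by norm_num)]

lemma rh_zero (hr : 0 < r) (hr1 : r < 1/2) : rh r 0 = 0 := by
  have h : (0 - (1 - r)) * (2 / r) ≤ 0 := by
    apply mul_nonpos_of_nonpos_of_nonneg <;> [linarith; positivity]
  simp only [rh]
  rw [min_eq_right (by linarith), max_eq_left (by linarith)]

lemma cl_abs_le (hr1 : r < 1/2) : |cl r t| ≤ 1 := by
  rw [abs_le]
  constructor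
  · exact le_max_left _ _
  · exact max_le (by norm_num) (min_le_left _ _)

lemma cl_eq_of_ge (hr1 : r < 1/2) (h : 1 - r ≤ t) : cl r t = 1 := by
  have hs : (0:ℝ) < 1 - r := by linarith
  have : (1:ℝ) ≤ t / (1 - r) := (le_div_iff₀ hs).2 (by linarith)
  rw [cl, min_eq_left this, max_eq_right (by norm_num)]

lemma cl_eq_of_le (hr1 : r < 1/2) (h : t ≤ -(1 - r)) : cl r t = -1 := by
  have hs : (0:ℝ) < 1 - r := by linarith
  have h2 : t / (1 - r) ≤ -1 := by rw [div_le_iff₀ hs]; linarith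
  rw [cl, min_eq_right (by linarith), max_eq_left h2]

lemma cl_eq_of_mid (hr1 : r < 1/2) (h1 : -(1 - r) ≤ t) (h2 : t ≤ 1 - r) :
    cl r t = t / (1 - r) := by
  have hs : (0:ℝ) < 1 - r := by linarith
  have ha : -1 ≤ t / (1 - r) := by rw [le_div_iff₀ hs]; linarith
  have hb : t / (1 - r) ≤ 1 := by rw [div_le_one hs]; linarith
  rw [cl, min_eq_right hb, max_eq_right ha]

lemma cl_sub_abs_le (hr : 0 < r) (hr1 : r < 1/2) (ht : |t| ≤ 1) :
    |cl r t - t| ≤ r / (1 - r) := by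
  have hs : (0:ℝ) < 1 - r := by linarith
  obtain ⟨ht1, ht2⟩ := abs_le.1 ht
  have hrr : r ≤ r / (1 - r) := by
    rw [le_div_iff₀ hs]; nlinarith
  rcases le_total (1 - r) t with h | h
  · rw [cl_eq_of_ge hr1 h, abs_le]; constructor <;> nlinarith
  rcases le_total t (-(1 - r)) with h' | h'
  · rw [cl_eq_of_le hr1 h', abs_le]; constructor <;> nlinarith
  · rw [cl_eq_of_mid hr1 h' h]
    have e : t / (1 - r) - t = t * (r / (1 - r)) := by field_simp; ring
    rw [e, abs_mul, abs_of_pos (show (0:ℝ) < r / (1-r) by positivity)]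
    nlinarith [div_pos hr hs]

lemma two_sub_cl_abs_le (hr : 0 < r) (hr1 : r < 1/2) (ht : |t| ≤ 1) :
    |2 * t - cl r t| ≤ 1 := by
  have hs : (0:ℝ) < 1 - r := by linarith
  obtain ⟨ht1, ht2⟩ := abs_le.1 ht
  rcases le_total (1 - r) t with h | h
  · rw [cl_eq_of_ge hr1 h, abs_le]; constructor <;> nlinarith
  rcases le_total t (-(1 - r)) with h' | h'
  · rw [cl_eq_of_le hr1 h', abs_le]; constructor <;> nlinarith
  · rw [cl_eq_of_mid hr1 h' h]
    have e : 2 * t - t / (1 - r) = t * ((1 - 2*r) / (1 - r)) := by field_simp; ring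
    rw [e, abs_mul]
    have h1 : |(1 - 2*r) / (1 - r)| ≤ 1 := by
      rw [abs_of_nonneg (div_nonneg (by linarith) (by linarith))]
      rw [div_le_one hs]; linarith
    nlinarith [abs_nonneg t, abs_nonneg ((1 - 2*r) / (1 - r))]

lemma key_pt (hr : 0 < r) (hr1 : r < 1/2) {y a : ℝ} (hy : |y| ≤ 1) (ht : |t| ≤ 1)
    (hty : 1 - r < t * y) (ha : 0 ≤ a) (ha1 : a ≤ 1) :
    |(1 + a) * y - a * cl r t| ≤ 1 := by
  obtain ⟨hy1, hy2⟩ := abs_le.1 hy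
  obtain ⟨ht1, ht2⟩ := abs_le.1 ht
  have hty' : (0:ℝ) < t * y := by linarith
  rcases lt_or_ge 0 t with hp | hp
  · have hyy : 1 - r < y := by nlinarith
    have htt : 1 - r ≤ t := by nlinarith
    rw [cl_eq_of_ge hr1 htt, abs_le]
    constructor <;> nlinarith
  · have hn : t < 0 := by rcases lt_or_eq_of_le hp with h | h; exact h; nlinarith
    have hyy : y < -(1 - r) := by nlinarith
    have htt : t ≤ -(1 - r) := by nlinarith
    rw [cl_eq_of_le hr1 htt, abs_le]
    constructor <;> nlinarith

lemma rh_nonneg : 0 ≤ rh r t := le_max_left _ _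
lemma rh_le_one : rh r t ≤ 1 := max_le (by norm_num) (min_le_left _ _)

lemma lt_of_rh_pos (hr : 0 < r) (h : 0 < rh r t) : 1 - r < t := by
  by_contra hc
  push_neg at hc
  have : (t - (1 - r)) * (2 / r) ≤ 0 :=
    mul_nonpos_of_nonpos_of_nonneg (by linarith) (by positivity)
  rw [rh, min_eq_right (by linarith), max_eq_left (by linarith)] at h
  exact absurd h (lt_irrefl 0)

lemma rh_eq_one (hr : 0 < r) (h : 1 - r/2 ≤ t) : rh r t = 1 := by
  have : (1:ℝ) ≤ (t - (1 - r)) * (2 / r) := by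
    have h2 : r/2 ≤ t - (1-r) := by linarith
    calc (1:ℝ) = (r/2) * (2/r) := by field_simp
    _ ≤ (t - (1 - r)) * (2/r) := mul_le_mul_of_nonneg_right h2 (by positivity)
  rw [rh, min_eq_left this, max_eq_right (by norm_num)]

lemma lt_of_rh_lt_one (hr : 0 < r) (h : rh r t < 1) : t < 1 - r/2 := by
  by_contra hc
  push_neg at hc
  rw [rh_eq_one hr hc] at h
  exact absurd h (lt_irrefl 1)

variable {L : Type*} [TopologicalSpace L]

/-- Post-composition of a `C₀` function with a continuous real function vanishing at `0`. -/
noncomputable def postcomp (k : ℝ → ℝ) (hk : Continuous k) (hk0 : k 0 = 0)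
    (f : C₀(L, ℝ)) : C₀(L, ℝ) :=
  ⟨⟨fun x => k (f x), hk.comp f.continuous⟩,
    by simpa [hk0, Function.comp_def] using (hk.tendsto' 0 0 hk0).comp f.zero_at_infty'⟩

@[simp] lemma postcomp_apply (k : ℝ → ℝ) (hk : Continuous k) (hk0 : k 0 = 0)
    (f : C₀(L, ℝ)) (x : L) : postcomp k hk hk0 f x = k (f x) := rfl

lemma norm_le' {f : C₀(L, ℝ)} {C : ℝ} (hC : 0 ≤ C) (h : ∀ x, |f x| ≤ C) : ‖f‖ ≤ C := by
  rw [← ZeroAtInftyContinuousMap.norm_toBCF_eq_norm]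
  exact BoundedContinuousFunction.norm_le hC |>.2 fun x => by simpa using h x

lemma apply_le (f : C₀(L, ℝ)) (x : L) : |f x| ≤ ‖f‖ := by
  rw [← ZeroAtInftyContinuousMap.norm_toBCF_eq_norm]
  simpa using f.toBCF.norm_coe_le_norm x

section Functional

variable {L : Type*} [TopologicalSpace L] {μ : C₀(L, ℝ) →L[ℝ] ℝ} {g : C₀(L, ℝ)}

lemma mubound (hμ : ‖μ‖ = 1) (W : C₀(L, ℝ)) (C : ℝ) (hC : 0 ≤ C)
    (h : ∀ x, |W x| ≤ C) : μ W ≤ C := by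
  have h1 : ‖μ W‖ ≤ ‖μ‖ * ‖W‖ := μ.le_opNorm W
  rw [hμ, one_mul, Real.norm_eq_abs] at h1
  calc μ W ≤ |μ W| := le_abs_self _
  _ ≤ ‖W‖ := h1
  _ ≤ C := norm_le' hC h

lemma key (hμ : ‖μ‖ = 1) (hμg : μ g = 1) (hgx : ∀ x, |g x| ≤ 1)
    (ψ h : C₀(L, ℝ)) (c : ℝ) (hc : 0 ≤ c) (hψ0 : ∀ x, 0 ≤ ψ x) (hψ1 : ∀ x, ψ x ≤ 1)
    (hh : ∀ x, |h x| ≤ c) : μ (ψ * h) ≤ c * μ (ψ * g) := by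
  have hW : ∀ x, |(ψ * h + c • g - c • (ψ * g)) x| ≤ c := by
    intro x
    have e : (ψ * h + c • g - c • (ψ * g)) x
        = ψ x * h x + c * g x - c * (ψ x * g x) := rfl
    rw [e, abs_le]
    obtain ⟨hh1, hh2⟩ := abs_le.1 (hh x)
    obtain ⟨hg1, hg2⟩ := abs_le.1 (hgx x)
    constructor
    · nlinarith [mul_nonneg (hψ0 x) (by linarith : (0:ℝ) ≤ c + h x),
        mul_nonneg (mul_nonneg hc (by linarith [hψ1 x] : (0:ℝ) ≤ 1 - ψ x))
          (by linarith : (0:ℝ) ≤ 1 + g x)]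
    · nlinarith [mul_nonneg (hψ0 x) (by linarith : (0:ℝ) ≤ c - h x),
        mul_nonneg (mul_nonneg hc (by linarith [hψ1 x] : (0:ℝ) ≤ 1 - ψ x))
          (by linarith : (0:ℝ) ≤ 1 - g x)]
  have h1 := mubound hμ _ c hc hW
  rw [map_sub, map_add, map_smul, map_smul, smul_eq_mul, smul_eq_mul, hμg, mul_one] at h1
  linarith

lemma keyabs (hμ : ‖μ‖ = 1) (hμg : μ g = 1) (hgx : ∀ x, |g x| ≤ 1)
    (ψ h : C₀(L, ℝ)) (c : ℝ) (hc : 0 ≤ c) (hψ0 : ∀ x, 0 ≤ ψ x) (hψ1 : ∀ x, ψ x ≤ 1)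
    (hh : ∀ x, |h x| ≤ c) : |μ (ψ * h)| ≤ c * μ (ψ * g) := by
  have h1 := key hμ hμg hgx ψ h c hc hψ0 hψ1 hh
  have h2 := key hμ hμg hgx ψ (-h) c hc hψ0 hψ1 (fun x => by
    have e : (-h) x = -(h x) := rfl
    rw [e, abs_neg]; exact hh x)
  have e : ψ * (-h) = -(ψ * h) := by
    ext x
    show ψ x * (-(h x)) = -(ψ x * h x)
    ring
  rw [e, map_neg] at h2
  rw [abs_le]; constructor <;> linarith

lemma mu_g3 (hμ : ‖μ‖ = 1) (hμg : μ g = 1) (hgx : ∀ x, |g x| ≤ 1) :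
    μ (g * (g * g)) = 1 := by
  have upper : μ (g * (g * g)) ≤ 1 := by
    apply mubound hμ _ 1 zero_le_one
    intro x
    have e : (g * (g * g)) x = g x * (g x * g x) := rfl
    rw [e, abs_mul, abs_mul]
    nlinarith [abs_nonneg (g x), hgx x]
  have lower : 1 ≤ μ (g * (g * g)) := by
    have hW : ∀ x, |(g + (2⁻¹ : ℝ) • (g - g * (g * g))) x| ≤ 1 := by
      intro x
      have e : (g + (2⁻¹ : ℝ) • (g - g * (g * g))) x
          = g x + 2⁻¹ * (g x - g x * (g x * g x)) := rfl
      rw [e, abs_le]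
      obtain ⟨h1, h2⟩ := abs_le.1 (hgx x)
      constructor
      · nlinarith [mul_nonneg (mul_nonneg (by linarith : (0:ℝ) ≤ 1 + g x)
          (by linarith : (0:ℝ) ≤ 1 + g x)) (by linarith : (0:ℝ) ≤ 2 - g x)]
      · nlinarith [mul_nonneg (mul_nonneg (by linarith : (0:ℝ) ≤ 1 - g x)
          (by linarith : (0:ℝ) ≤ 1 - g x)) (by linarith : (0:ℝ) ≤ 2 + g x)]
    have h1 := mubound hμ _ 1 zero_le_one hW
    rw [map_add, map_smul, map_sub, smul_eq_mul, hμg] at h1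
    linarith
  linarith

lemma mu_gg (hμ : ‖μ‖ = 1) (hμg : μ g = 1) (hgx : ∀ x, |g x| ≤ 1) (f : C₀(L, ℝ)) :
    μ (g * (g * f)) = μ f := by
  have hg3 := mu_g3 hμ hμg hgx
  have hfx : ∀ x, |f x| ≤ ‖f‖ := apply_le f
  have hWgen : ∀ (u : C₀(L, ℝ)), (∀ x, |u x| ≤ ‖f‖) →
      ∀ x, |(u - g * (g * u) + ‖f‖ • (g * (g * g))) x| ≤ ‖f‖ := by
    intro u hu x
    have e : (u - g * (g * u) + ‖f‖ • (g * (g * g))) x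
        = u x - g x * (g x * u x) + ‖f‖ * (g x * (g x * g x)) := rfl
    rw [e]
    obtain ⟨h1, h2⟩ := abs_le.1 (hgx x)
    obtain ⟨h3, h4⟩ := abs_le.1 (hu x)
    rw [abs_le]
    constructor
    · nlinarith [mul_nonneg (by nlinarith : (0:ℝ) ≤ 1 - g x * g x)
          (by linarith : (0:ℝ) ≤ ‖f‖ + u x),
        mul_nonneg (mul_nonneg (norm_nonneg f) (mul_self_nonneg (g x)))
          (by linarith : (0:ℝ) ≤ 1 + g x)]
    · nlinarith [mul_nonneg (by nlinarith : (0:ℝ) ≤ 1 - g x * g x)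
          (by linarith : (0:ℝ) ≤ ‖f‖ - u x),
        mul_nonneg (mul_nonneg (norm_nonneg f) (mul_self_nonneg (g x)))
          (by linarith : (0:ℝ) ≤ 1 - g x)]
  have h1 := mubound hμ _ ‖f‖ (norm_nonneg f) (hWgen f hfx)
  have h2 := mubound hμ _ ‖f‖ (norm_nonneg f) (hWgen (-f) (fun x => by
    have e : (-f) x = -(f x) := rfl
    rw [e, abs_neg]; exact hfx x))
  rw [map_add, map_sub, map_smul, smul_eq_mul, hg3, mul_one] at h1
  have e : g * (g * (-f)) = -(g * (g * f)) := by
    ext x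
    show g x * (g x * (-(f x))) = -(g x * (g x * f x))
    ring
  rw [e, map_add, map_sub, map_neg, map_neg, map_smul, smul_eq_mul, hg3, mul_one] at h2
  linarith

lemma lemB (hμ : ‖μ‖ = 1) (hμg : μ g = 1) (hgx : ∀ x, |g x| ≤ 1)
    (φ : C₀(L, ℝ)) (hφ0 : ∀ x, 0 ≤ φ x)
    (u : C₀(L, ℝ)) (c : ℝ) (hc : 0 ≤ c) (hu0 : ∀ x, 0 ≤ u x)
    (huc : ∀ x, u x + c * φ x ≤ c) : μ (g * u) ≤ c * (1 - μ (φ * g)) := by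
  have hW : ∀ x, |(g * u + c • (φ * g)) x| ≤ c := by
    intro x
    have e : (g * u + c • (φ * g)) x = g x * u x + c * (φ x * g x) := rfl
    rw [e]
    have e2 : g x * u x + c * (φ x * g x) = g x * (u x + c * φ x) := by ring
    rw [e2, abs_mul]
    have h0 : 0 ≤ u x + c * φ x := by
      have := mul_nonneg hc (hφ0 x); have := hu0 x; linarith
    rw [abs_of_nonneg h0]
    nlinarith [abs_nonneg (g x), hgx x, huc x]
  have h1 := mubound hμ _ c hc hW
  rw [map_add, map_smul, smul_eq_mul] at h1
  linarith

lemma complB (hμ : ‖μ‖ = 1) (hμg : μ g = 1) (hgx : ∀ x, |g x| ≤ 1)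
    (φ : C₀(L, ℝ)) (hφ0 : ∀ x, 0 ≤ φ x) (hφ1 : ∀ x, φ x ≤ 1) (f : C₀(L, ℝ)) :
    μ f - μ (φ * f) ≤ (1 - μ (φ * g)) * ‖f‖ := by
  have hW : ∀ x, |(f - φ * f + ‖f‖ • (φ * g)) x| ≤ ‖f‖ := by
    intro x
    have e : (f - φ * f + ‖f‖ • (φ * g)) x
        = f x - φ x * f x + ‖f‖ * (φ x * g x) := rfl
    rw [e, abs_le]
    obtain ⟨h3, h4⟩ := abs_le.1 (apply_le f x)
    obtain ⟨hg1, hg2⟩ := abs_le.1 (hgx x)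
    constructor
    · nlinarith [mul_nonneg (by linarith [hφ1 x] : (0:ℝ) ≤ 1 - φ x)
        (by linarith : (0:ℝ) ≤ ‖f‖ + f x), mul_nonneg (mul_nonneg
          (norm_nonneg f) (hφ0 x)) (by linarith : (0:ℝ) ≤ 1 + g x)]
    · nlinarith [mul_nonneg (by linarith [hφ1 x] : (0:ℝ) ≤ 1 - φ x)
        (by linarith : (0:ℝ) ≤ ‖f‖ - f x), mul_nonneg (mul_nonneg
          (norm_nonneg f) (hφ0 x)) (by linarith : (0:ℝ) ≤ 1 - g x)]
  have h1 := mubound hμ _ ‖f‖ (norm_nonneg f) hW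
  rw [map_add, map_sub, map_smul, smul_eq_mul] at h1
  nlinarith [norm_nonneg f]

lemma complBabs (hμ : ‖μ‖ = 1) (hμg : μ g = 1) (hgx : ∀ x, |g x| ≤ 1)
    (φ : C₀(L, ℝ)) (hφ0 : ∀ x, 0 ≤ φ x) (hφ1 : ∀ x, φ x ≤ 1) (f : C₀(L, ℝ)) :
    |μ f - μ (φ * f)| ≤ (1 - μ (φ * g)) * ‖f‖ := by
  have h1 := complB hμ hμg hgx φ hφ0 hφ1 f
  have h2 := complB hμ hμg hgx φ hφ0 hφ1 (-f)
  have e : φ * (-f) = -(φ * f) := by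
    ext x
    show φ x * (-(f x)) = -(φ x * f x)
    ring
  rw [map_neg, e, map_neg, norm_neg] at h2
  rw [abs_le]; constructor <;> linarith

end Functional

end NuAux

set_option maxHeartbeats 4000000 in
private lemma nuAux_main {L : Type*} [TopologicalSpace L] :
    ∀ ε : ℝ, 0 < ε → ε < 1 / 4 →
      ∀ (f₀ : C₀(L, ℝ)) (μ : C₀(L, ℝ) →L[ℝ] ℝ) (T : C₀(L, ℝ) →L[ℝ] C₀(L, ℝ)),
        ‖f₀‖ = 1 → ‖μ‖ = 1 → ‖T‖ = 1 → 1 - ε ^ 2 / 50 < μ f₀ → |μ (T f₀)| = 1 →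
        ∃ (f₁ : C₀(L, ℝ)) (ν : C₀(L, ℝ) →L[ℝ] ℝ),
          ‖f₁‖ = 1 ∧ ‖ν‖ = 1 ∧ |ν (T f₁)| = 1 ∧ ν f₁ = 1 ∧
          ‖f₁ - f₀‖ < ε ∧ ‖ν - μ‖ < ε := by
    intro ε hε hε4 f₀ μ T hf₀ hμ hT hμf₀ hμT
    set r : ℝ := ε / 10 with hrdef
    have hr : 0 < r := by positivity
    have hr1 : r < 1/2 := by rw [hrdef]; linarith
    obtain ⟨s, hsdef⟩ : ∃ s : ℝ, s = μ (T f₀) := ⟨_, rfl⟩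
    have habs : |s| = 1 := by rw [hsdef]; exact hμT
    have hs : s = 1 ∨ s = -1 := (abs_eq (by norm_num : (0:ℝ) ≤ 1)).1 habs
    have hss : s * s = 1 := by rcases hs with h | h <;> rw [h] <;> norm_num
    obtain ⟨g, hgdef⟩ : ∃ g : C₀(L, ℝ), g = s • T f₀ := ⟨_, rfl⟩
    have hTf₀n : ‖T f₀‖ ≤ 1 := by
      calc ‖T f₀‖ ≤ ‖T‖ * ‖f₀‖ := T.le_opNorm f₀
      _ = 1 := by rw [hT, hf₀, one_mul]
    have hgx : ∀ x, |g x| ≤ 1 := by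
      intro x
      have e : g x = s * (T f₀) x := by rw [hgdef]; rfl
      rw [e, abs_mul, habs, one_mul]
      exact (NuAux.apply_le _ x).trans hTf₀n
    have hgnorm : ‖g‖ ≤ 1 := NuAux.norm_le' zero_le_one hgx
    have hf₀x : ∀ x, |f₀ x| ≤ 1 := fun x => (NuAux.apply_le f₀ x).trans hf₀.le
    have hμg : μ g = 1 := by rw [hgdef, map_smul, smul_eq_mul, ← hsdef, hss]
    have mubound := NuAux.mubound hμ
    have key := NuAux.key hμ hμg hgx
    have keyabs := NuAux.keyabs hμ hμg hgx
    have hF2 := NuAux.mu_gg hμ hμg hgx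
    -- the bump function φ
    obtain ⟨p, hpdef⟩ : ∃ p : C₀(L, ℝ), p = f₀ * g := ⟨_, rfl⟩
    have hp_app : ∀ x, p x = f₀ x * g x := by intro x; rw [hpdef]; rfl
    have hpx : ∀ x, |p x| ≤ 1 := by
      intro x
      rw [hp_app, abs_mul]
      nlinarith [abs_nonneg (f₀ x), hf₀x x, hgx x]
    obtain ⟨φ, hφdef⟩ : ∃ φ : C₀(L, ℝ),
        φ = NuAux.postcomp (NuAux.rh r) (NuAux.rh_continuous r) (NuAux.rh_zero hr hr1) p :=
      ⟨_, rfl⟩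
    have hφx : ∀ x, φ x = NuAux.rh r (p x) := by intro x; rw [hφdef]; rfl
    have hφ0 : ∀ x, 0 ≤ φ x := fun x => (hφx x) ▸ NuAux.rh_nonneg
    have hφ1 : ∀ x, φ x ≤ 1 := fun x => (hφx x) ▸ NuAux.rh_le_one
    set m : ℝ := μ (φ * g) with hmdef
    have hm_le1 : m ≤ 1 := by
      apply mubound _ 1 zero_le_one
      intro x
      have e : (φ * g) x = φ x * g x := rfl
      rw [e, abs_mul]
      nlinarith [abs_nonneg (φ x), abs_le.2 ⟨by linarith [hφ0 x], hφ1 x⟩, hgx x,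
        abs_nonneg (g x)]
    -- lower bound for m
    have hm_lb : 1 - m < 2 * ε / 5 := by
      have c1 : μ (φ * (g * p)) ≤ 1 * μ (φ * g) := by
        apply key φ (g * p) 1 zero_le_one hφ0 hφ1
        intro x
        have e : (g * p) x = g x * p x := rfl
        rw [e, abs_mul]
        nlinarith [abs_nonneg (g x), hgx x, hpx x, abs_nonneg (p x)]
      obtain ⟨pplus, hppdef⟩ : ∃ q : C₀(L, ℝ), q = NuAux.postcomp (fun t => max t 0)
        (continuous_id.max continuous_const) (by simp) p := ⟨_, rfl⟩
      obtain ⟨nneg, hnndef⟩ : ∃ q : C₀(L, ℝ), q = NuAux.postcomp (fun t => max (-t) 0)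
        (continuous_neg.max continuous_const) (by simp) p := ⟨_, rfl⟩
      have hpp_app : ∀ x, pplus x = max (p x) 0 := by intro x; rw [hppdef]; rfl
      have hnn_app : ∀ x, nneg x = max (-p x) 0 := by intro x; rw [hnndef]; rfl
      obtain ⟨u₁, hu₁def⟩ : ∃ u : C₀(L, ℝ), u = pplus - pplus * φ := ⟨_, rfl⟩
      obtain ⟨u₂, hu₂def⟩ : ∃ u : C₀(L, ℝ), u = nneg - nneg * φ := ⟨_, rfl⟩
      have hu₁_app : ∀ x, u₁ x = max (p x) 0 * (1 - φ x) := by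
        intro x
        rw [hu₁def]
        show pplus x - pplus x * φ x = max (p x) 0 * (1 - φ x)
        rw [hpp_app]; ring
      have hu₂_app : ∀ x, u₂ x = max (-p x) 0 * (1 - φ x) := by
        intro x
        rw [hu₂def]
        show nneg x - nneg x * φ x = max (-p x) 0 * (1 - φ x)
        rw [hnn_app]; ring
      have iden : g * p - φ * (g * p) = g * u₁ - g * u₂ := by
        ext x
        show g x * p x - φ x * (g x * p x) = g x * u₁ x - g x * u₂ x
        rw [hu₁_app, hu₂_app]
        have hMN := max_zero_sub_max_neg_zero_eq_self (p x)
        linear_combination (g x * (φ x - 1)) * hMN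
      have b1 : μ (g * u₁) ≤ (1 - r/2) * (1 - m) := by
        have huc : ∀ x, u₁ x + (1 - r/2) * φ x ≤ 1 - r/2 := by
          intro x
          rw [hu₁_app]
          have hM0 : (0:ℝ) ≤ max (p x) 0 := le_max_right _ _
          rcases lt_or_ge (φ x) 1 with h | h
          · have h' : NuAux.rh r (p x) < 1 := by rw [← hφx]; exact h
            have hp2 : p x < 1 - r/2 := NuAux.lt_of_rh_lt_one hr h'
            have hM : max (p x) 0 ≤ 1 - r/2 := max_le hp2.le (by linarith)
            nlinarith [hφ0 x, hφ1 x]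
          · have hφeq : φ x = 1 := le_antisymm (hφ1 x) h
            rw [hφeq]; nlinarith [hM0]
        have hu0 : ∀ x, 0 ≤ u₁ x := by
          intro x
          rw [hu₁_app]
          exact mul_nonneg (le_max_right _ _) (by linarith [hφ1 x])
        have := NuAux.lemB hμ hμg hgx φ hφ0 u₁ (1 - r/2) (by linarith) hu0 huc
        rw [← hmdef] at this
        exact this
      have b2 : 0 ≤ μ (g * u₂) := by
        have h1 : μ (u₂ * (0 : C₀(L, ℝ))) ≤ 1 * μ (u₂ * g) := by
          apply key u₂ 0 1 zero_le_one
          · intro x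
            rw [hu₂_app]
            have h0 : 0 ≤ max (-p x) 0 := le_max_right _ _
            nlinarith [hφ1 x]
          · intro x
            rw [hu₂_app]
            have h0 : 0 ≤ max (-p x) 0 := le_max_right _ _
            have h1 : max (-p x) 0 ≤ 1 := by
              apply max_le _ zero_le_one
              have := abs_le.1 (hpx x); linarith
            nlinarith [hφ0 x, hφ1 x]
          · intro x
            show |(0 : C₀(L, ℝ)) x| ≤ 1
            norm_num
        rw [mul_zero, map_zero, one_mul] at h1
        have e : u₂ * g = g * u₂ := mul_comm _ _
        rw [e] at h1; exact h1
      have c2 : μ f₀ = μ (g * p) := by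
        have e : g * p = g * (g * f₀) := by
          ext x
          show g x * p x = g x * (g x * f₀ x)
          rw [hp_app]; ring
        rw [e, hF2]
      have c3 : μ (g * p) - μ (φ * (g * p)) ≤ (1 - r/2) * (1 - m) := by
        have e : μ (g * p) - μ (φ * (g * p)) = μ (g * u₁) - μ (g * u₂) := by
          rw [← map_sub, ← map_sub, iden]
        rw [e]; linarith
      rw [one_mul, ← hmdef] at c1
      have final : 1 - ε^2/50 < m + (1 - r/2) * (1 - m) := by
        calc 1 - ε^2/50 < μ f₀ := hμf₀
        _ = μ (g * p) := c2
        _ = μ (φ * (g * p)) + (μ (g * p) - μ (φ * (g * p))) := by ring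
        _ ≤ m + (1 - r/2) * (1 - m) := add_le_add c1 c3
      rw [hrdef] at final
      nlinarith [final, hε]
    have hm_pos : 0 < m := by nlinarith [hm_lb, hε4, hε]
    -- the new function f₁
    obtain ⟨f₁, hf₁def⟩ : ∃ f₁ : C₀(L, ℝ),
        f₁ = NuAux.postcomp (NuAux.cl r) (NuAux.cl_continuous r) (NuAux.cl_zero hr1) f₀ :=
      ⟨_, rfl⟩
    have hf₁_app : ∀ x, f₁ x = NuAux.cl r (f₀ x) := by intro x; rw [hf₁def]; rfl
    have hf₁x : ∀ x, |f₁ x| ≤ 1 := fun x => (hf₁_app x) ▸ NuAux.cl_abs_le hr1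
    have hf₁norm_le : ‖f₁‖ ≤ 1 := NuAux.norm_le' zero_le_one hf₁x
    have hdist : ‖f₁ - f₀‖ < ε := by
      have h1 : ‖f₁ - f₀‖ ≤ r / (1 - r) := by
        apply NuAux.norm_le' (div_nonneg hr.le (by linarith))
        intro x
        have e : (f₁ - f₀) x = NuAux.cl r (f₀ x) - f₀ x := by
          show f₁ x - f₀ x = _
          rw [hf₁_app]
        rw [e]
        exact NuAux.cl_sub_abs_le hr hr1 (hf₀x x)
      have h2 : r / (1 - r) < ε := by
        rw [div_lt_iff₀ (by linarith : (0:ℝ) < 1 - r), hrdef]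
        nlinarith [hε, hr1]
      linarith
    -- μ(φ f₁) = m
    have hφf₁ : μ (φ * f₁) = m := by
      have upper : μ (φ * f₁) ≤ m := by
        have := key φ f₁ 1 zero_le_one hφ0 hφ1 hf₁x
        rw [one_mul, ← hmdef] at this
        exact this
      have lower : m ≤ μ (φ * f₁) := by
        have hW : ∀ x, |(g + (φ * g - φ * f₁)) x| ≤ 1 := by
          intro x
          have e : (g + (φ * g - φ * f₁)) x
              = (1 + φ x) * g x - φ x * NuAux.cl r (f₀ x) := by
            show g x + (φ x * g x - φ x * f₁ x)
              = (1 + φ x) * g x - φ x * NuAux.cl r (f₀ x)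
            rw [hf₁_app]; ring
          rw [e]
          rcases (hφ0 x).lt_or_eq with h | h
          · have h' : 0 < NuAux.rh r (p x) := by rw [← hφx]; exact h
            have hty : 1 - r < f₀ x * g x := by
              have := NuAux.lt_of_rh_pos hr h'
              rwa [hp_app] at this
            exact NuAux.key_pt hr hr1 (hgx x) (hf₀x x) hty (hφ0 x) (hφ1 x)
          · rw [← h]
            simpa using hgx x
        have h1 := mubound _ 1 zero_le_one hW
        rw [map_add, map_sub, ← hmdef, hμg] at h1
        linarith
      linarith
    -- μ(φ (T f₁)) = s m
    have hTf₀g : T f₀ = s • g := by rw [hgdef, smul_smul, hss, one_smul]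
    have e1 : μ (φ * T f₀) = s * m := by
      rw [hTf₀g, mul_smul_comm, map_smul, smul_eq_mul, ← hmdef]
    have hTf₁x : ∀ x, |T f₁ x| ≤ 1 := by
      intro x
      have h1 : ‖T f₁‖ ≤ 1 := by
        calc ‖T f₁‖ ≤ ‖T‖ * ‖f₁‖ := T.le_opNorm f₁
        _ ≤ 1 := by rw [hT, one_mul]; exact hf₁norm_le
      exact (NuAux.apply_le _ x).trans h1
    have e2 : |μ (φ * T f₁)| ≤ m := by
      have := keyabs φ (T f₁) 1 zero_le_one hφ0 hφ1 hTf₁x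
      rw [one_mul, ← hmdef] at this
      exact this
    obtain ⟨d, hddef⟩ : ∃ d : C₀(L, ℝ), d = (2 : ℝ) • f₀ - f₁ := ⟨_, rfl⟩
    have hdx : ∀ x, |d x| ≤ 1 := by
      intro x
      have e : d x = 2 * f₀ x - NuAux.cl r (f₀ x) := by
        rw [hddef]
        show 2 * f₀ x - f₁ x = _
        rw [hf₁_app]
      rw [e]
      exact NuAux.two_sub_cl_abs_le hr hr1 (hf₀x x)
    have hTdx : ∀ x, |T d x| ≤ 1 := by
      intro x
      have h1 : ‖T d‖ ≤ 1 := by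
        calc ‖T d‖ ≤ ‖T‖ * ‖d‖ := T.le_opNorm d
        _ ≤ 1 := by rw [hT, one_mul]; exact NuAux.norm_le' zero_le_one hdx
      exact (NuAux.apply_le _ x).trans h1
    have e3 : |μ (φ * T d)| ≤ m := by
      have := keyabs φ (T d) 1 zero_le_one hφ0 hφ1 hTdx
      rw [one_mul, ← hmdef] at this
      exact this
    have e4 : μ (φ * T f₁) + μ (φ * T d) = 2 * (s * m) := by
      have hsum : f₁ + d = (2 : ℝ) • f₀ := by rw [hddef]; abel
      have : φ * T f₁ + φ * T d = (2:ℝ) • (φ * T f₀) := by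
        rw [← mul_add, ← map_add, hsum, map_smul, mul_smul_comm]
      calc μ (φ * T f₁) + μ (φ * T d) = μ (φ * T f₁ + φ * T d) := (map_add μ _ _).symm
      _ = μ ((2:ℝ) • (φ * T f₀)) := by rw [this]
      _ = 2 * μ (φ * T f₀) := by rw [map_smul, smul_eq_mul]
      _ = 2 * (s * m) := by rw [e1]
    have e5 : μ (φ * T f₁) = s * m := by
      obtain ⟨e2a, e2b⟩ := abs_le.1 e2
      obtain ⟨e3a, e3b⟩ := abs_le.1 e3
      rcases hs with h | h <;> rw [h] at e4 ⊢ <;> linarith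
    -- the functional ν
    obtain ⟨ν, hνdef⟩ : ∃ ν : C₀(L, ℝ) →L[ℝ] ℝ,
        ν = m⁻¹ • (μ.comp (ContinuousLinearMap.mul ℝ C₀(L, ℝ) φ)) := ⟨_, rfl⟩
    have hνapp : ∀ f : C₀(L, ℝ), ν f = m⁻¹ * μ (φ * f) := by
      intro f; rw [hνdef]; rfl
    have hν_le : ‖ν‖ ≤ 1 := by
      apply ContinuousLinearMap.opNorm_le_bound _ zero_le_one
      intro f
      rw [hνapp, one_mul, Real.norm_eq_abs, abs_mul, abs_of_nonneg (by positivity : (0:ℝ) ≤ m⁻¹)]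
      have h1 : |μ (φ * f)| ≤ ‖f‖ * m := by
        have := keyabs φ f ‖f‖ (norm_nonneg f) hφ0 hφ1 (NuAux.apply_le f)
        rw [← hmdef] at this
        exact this
      calc m⁻¹ * |μ (φ * f)| ≤ m⁻¹ * (‖f‖ * m) := by
            apply mul_le_mul_of_nonneg_left h1 (by positivity)
      _ = ‖f‖ := by field_simp
    have hνf₁ : ν f₁ = 1 := by
      rw [hνapp, hφf₁]
      field_simp
    have hνT : |ν (T f₁)| = 1 := by
      rw [hνapp, e5]
      have : m⁻¹ * (s * m) = s := by field_simp
      rw [this, habs]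
    have hf₁norm : ‖f₁‖ = 1 := by
      have h1 : |ν f₁| ≤ ‖ν‖ * ‖f₁‖ := by
        have := ν.le_opNorm f₁
        rwa [Real.norm_eq_abs] at this
      rw [hνf₁, abs_one] at h1
      have h2 : (1:ℝ) ≤ ‖f₁‖ := by
        nlinarith [mul_nonneg (by linarith [hν_le] : (0:ℝ) ≤ 1 - ‖ν‖) (norm_nonneg f₁)]
      linarith [hf₁norm_le]
    have hνnorm : ‖ν‖ = 1 := by
      have h1 : |ν f₁| ≤ ‖ν‖ * ‖f₁‖ := by
        have := ν.le_opNorm f₁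
        rwa [Real.norm_eq_abs] at this
      rw [hνf₁, hf₁norm, mul_one, abs_one] at h1
      linarith [hν_le]
    -- ‖ν - μ‖ < ε
    have hνμ : ‖ν - μ‖ < ε := by
      have hb : ‖ν - μ‖ ≤ 2 * (1 - m) := by
        apply ContinuousLinearMap.opNorm_le_bound _ (by linarith)
        intro f
        have hA : |μ (φ * f)| ≤ ‖f‖ * m := by
          have := keyabs φ f ‖f‖ (norm_nonneg f) hφ0 hφ1 (NuAux.apply_le f)
          rw [← hmdef] at this
          exact this
        have hB : |μ f - μ (φ * f)| ≤ (1 - m) * ‖f‖ := by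
          have hWgen : ∀ (u : C₀(L, ℝ)), (∀ x, u x = f x ∨ u x = -f x) →
              μ u - μ (φ * u) ≤ (1 - m) * ‖f‖ := by
            intro u hu
            have hW : ∀ x, |(u - φ * u + ‖f‖ • (φ * g)) x| ≤ ‖f‖ := by
              intro x
              have e : (u - φ * u + ‖f‖ • (φ * g)) x
                  = u x - φ x * u x + ‖f‖ * (φ x * g x) := rfl
              rw [e]
              have hux : |u x| ≤ ‖f‖ := by
                rcases hu x with h | h <;> rw [h]
                · exact NuAux.apply_le f x
                · show |(-f) x| ≤ ‖f‖
                  have : (-f) x = -(f x) := rfl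
                  rw [this, abs_neg]; exact NuAux.apply_le f x
              obtain ⟨h3, h4⟩ := abs_le.1 hux
              obtain ⟨hg1, hg2⟩ := abs_le.1 (hgx x)
              rw [abs_le]
              constructor
              · nlinarith [mul_nonneg (by linarith [hφ1 x] : (0:ℝ) ≤ 1 - φ x)
                  (by linarith : (0:ℝ) ≤ ‖f‖ + u x), mul_nonneg (mul_nonneg
                    (norm_nonneg f) (hφ0 x)) (by linarith : (0:ℝ) ≤ 1 + g x)]
              · nlinarith [mul_nonneg (by linarith [hφ1 x] : (0:ℝ) ≤ 1 - φ x)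
                  (by linarith : (0:ℝ) ≤ ‖f‖ - u x), mul_nonneg (mul_nonneg
                    (norm_nonneg f) (hφ0 x)) (by linarith : (0:ℝ) ≤ 1 - g x)]
            have h1 := mubound _ ‖f‖ (norm_nonneg f) hW
            rw [map_add, map_sub, map_smul, smul_eq_mul, ← hmdef] at h1
            nlinarith [norm_nonneg f]
          have h1 := hWgen f (fun x => Or.inl rfl)
          have h2 := hWgen (-f) (fun x => Or.inr rfl)
          have e : φ * (-f) = -(φ * f) := by
            ext x
            show φ x * (-(f x)) = -(φ x * f x)
            ring
          rw [map_neg, e, map_neg] at h2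
          rw [abs_le]; constructor <;> linarith
        have e : (ν - μ) f = (m⁻¹ - 1) * μ (φ * f) - (μ f - μ (φ * f)) := by
          have : (ν - μ) f = ν f - μ f := rfl
          rw [this, hνapp]; ring
        rw [e, Real.norm_eq_abs]
        have hminv : 0 ≤ m⁻¹ - 1 := by
          nlinarith [mul_inv_cancel₀ (ne_of_gt hm_pos),
            mul_nonneg (inv_nonneg.2 hm_pos.le) (by linarith : (0:ℝ) ≤ 1 - m)]
        have h5 : |(m⁻¹ - 1) * μ (φ * f)| ≤ (1 - m) * ‖f‖ := by
          rw [abs_mul, abs_of_nonneg hminv]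
          calc (m⁻¹ - 1) * |μ (φ * f)| ≤ (m⁻¹ - 1) * (‖f‖ * m) := by
                apply mul_le_mul_of_nonneg_left hA hminv
          _ = (1 - m) * ‖f‖ := by field_simp
        calc |(m⁻¹ - 1) * μ (φ * f) - (μ f - μ (φ * f))|
            ≤ |(m⁻¹ - 1) * μ (φ * f)| + |μ f - μ (φ * f)| := abs_sub _ _
        _ ≤ (1 - m) * ‖f‖ + (1 - m) * ‖f‖ := add_le_add h5 hB
        _ = 2 * (1 - m) * ‖f‖ := by ring
      nlinarith [hm_lb, hε]
    exact ⟨f₁, ν, hf₁norm, hνnorm, hνT, hνf₁, hdist, hνμ⟩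

/-- For the real space `C₀(L)`: if `0 < ε < 1/4`, `f₀ ∈ S_{C₀(L)}`, `μ ∈ S_{C₀(L)*}` and
`‖T‖ = 1` satisfy `μ(f₀) > 1 - ε²/50` and `|μ(T f₀)| = 1`, then there exist `f₁ ∈ S_{C₀(L)}`
and `ν ∈ S_{C₀(L)*}` with `|ν(T f₁)| = ν(f₁) = 1`, `‖f₁ - f₀‖ < ε` and `‖ν - μ‖ < ε`.
In particular, every real `C₀(L)` has property (nu). -/
theorem propertyNu_C0_real (L : Type*) [TopologicalSpace L] [LocallyCompactSpace L]
    [T2Space L] :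
    (∀ ε : ℝ, 0 < ε → ε < 1 / 4 →
      ∀ (f₀ : C₀(L, ℝ)) (μ : C₀(L, ℝ) →L[ℝ] ℝ) (T : C₀(L, ℝ) →L[ℝ] C₀(L, ℝ)),
        ‖f₀‖ = 1 → ‖μ‖ = 1 → ‖T‖ = 1 → 1 - ε ^ 2 / 50 < μ f₀ → |μ (T f₀)| = 1 →
        ∃ (f₁ : C₀(L, ℝ)) (ν : C₀(L, ℝ) →L[ℝ] ℝ),
          ‖f₁‖ = 1 ∧ ‖ν‖ = 1 ∧ |ν (T f₁)| = 1 ∧ ν f₁ = 1 ∧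
          ‖f₁ - f₀‖ < ε ∧ ‖ν - μ‖ < ε) ∧
    PropertyNu ℝ C₀(L, ℝ) := by
  refine ⟨fun a b c => nuAux_main a b c, ?_⟩
  intro ε hε
  set ε' : ℝ := min (ε / 2) (1 / 5) with hε'def
  have hε'pos : 0 < ε' := lt_min (by linarith) (by norm_num)
  have hε'4 : ε' < 1 / 4 := lt_of_le_of_lt (min_le_right _ _) (by norm_num)
  have hε'ε : ε' < ε := lt_of_le_of_lt (min_le_left _ _) (by linarith)
  refine ⟨ε' ^ 2 / 50, by positivity, ?_⟩
  intro T x₀ f₀ hT hx₀ hf₀ hre hnorm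
  have hre' : 1 - ε' ^ 2 / 50 < f₀ x₀ := by
    rwa [RCLike.re_to_real] at hre
  have hnorm' : |f₀ (T x₀)| = 1 := by
    rwa [Real.norm_eq_abs] at hnorm
  obtain ⟨f₁, ν, h1, h2, h3, h4, h5, h6⟩ :=
    nuAux_main ε' hε'pos hε'4 x₀ f₀ T hx₀ hf₀ hT hre' hnorm'
  refine ⟨T, f₁, ν, hT, h1, h2, ?_, h4, lt_trans h5 hε'ε, lt_trans h6 hε'ε, ?_⟩
  · rwa [Real.norm_eq_abs]
  · rw [sub_self, norm_zero]; exact hε
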